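/- Let G = (V, E) be a graph with no isolated vertices, at least one edge, V = {v₁, …, v_n}, and let k be a positive integer. Construct the graph H as follows: take k disjoint copies V_j = {v₁^j, …, v_n^j} (j ∈ [k]) of V, let V_s = {s_{uv}, s'_{uv}, s''_{uv} : uv ∈ E}, set V(H) = ⋃_{j=1}^k V_j ∪ V_s, and let E(H) consist of the edges u^j s_{uv}, u^j s'_{uv}, u^j s''_{uv}, v^j s_{uv}, v^j s'_{uv}, v^j s''_{uv} for each uv ∈ E and j ∈ [k], together with all edges between pairs of vertices of V_s (so that V_s forms a clique). Then kn/α(G) + 3|E| ≤ k·χ_f(G) + 3|E| ≤ χ_k(G) + 3|E| ≤ rvd(H) ≤ k·χ(G) + 3|E|, where α(G) is the independence number, χ_f(G) the fractional chromatic number, χ_k(G) the k-fold chromatic number, and χ(G) the chromatic number of G. -/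

import Mathlib

open SimpleGraph

variable {V : Type*}

/-- `c` is a rainbow vertex-disconnection coloring of `G`: for any two distinct vertices
`x, y` there is a set `S` avoiding `x` and `y` that meets every `x`-`y` walk of `G - xy`
(i.e. `x` and `y` lie in different components of `(G - xy) - S`), and which is rainbow
(when `x, y` nonadjacent), resp. such that `S + x` or `S + y` is rainbow (when adjacent). -/
def IsRVDColoring {α : Type*} (G : SimpleGraph V) (c : V → α) : Prop :=
  ∀ x y : V, x ≠ y → ∃ S : Set V,
    x ∉ S ∧ y ∉ S ∧
    (∀ p : (G.deleteEdges {s(x, y)}).Walk x y, ∃ v ∈ p.support, v ∈ S) ∧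
    (G.Adj x y → Set.InjOn c (insert x S) ∨ Set.InjOn c (insert y S)) ∧
    (¬ G.Adj x y → Set.InjOn c S)

/-- The rainbow vertex-disconnection number: the minimum number of colors of a
rainbow vertex-disconnection coloring. -/
noncomputable def rvd (G : SimpleGraph V) : ℕ :=
  sInf {n | ∃ c : V → Fin n, IsRVDColoring G c}

/-- `G` contains `K₄` as a minor (via a minor model with four branch sets). -/
def HasK4Minor (G : SimpleGraph V) : Prop :=
  ∃ B : Fin 4 → Set V,
    (∀ i, (B i).Nonempty) ∧
    (∀ i, (G.induce (B i)).Connected) ∧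
    (∀ i j, i ≠ j → Disjoint (B i) (B j)) ∧
    (∀ i j, i ≠ j → ∃ a ∈ B i, ∃ b ∈ B j, G.Adj a b)

/-- A finite graph is 2-connected if it has at least 3 vertices and deleting any
single vertex leaves a connected graph. -/
def TwoConnected [Fintype V] (G : SimpleGraph V) : Prop :=
  3 ≤ Fintype.card V ∧ ∀ w : V, (G.induce ({w}ᶜ : Set V)).Connected

/-- Contraction of the edge `uv`: delete `v` and join `u` to the former neighbors of `v`. -/
def contractEdge (G : SimpleGraph V) (u v : V) : SimpleGraph {x : V // x ≠ v} where
  Adj a b := a ≠ b ∧ (G.Adj a b ∨ ((a : V) = u ∧ G.Adj v b) ∨ ((b : V) = u ∧ G.Adj v a))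
  symm := by
    constructor
    rintro a b ⟨h1, h2⟩
    refine ⟨h1.symm, ?_⟩
    rcases h2 with h | h | h
    · exact Or.inl h.symm
    · exact Or.inr (Or.inr h)
    · exact Or.inr (Or.inl h)
  loopless := by constructor; rintro a ⟨h, _⟩; exact h rfl

/-- `T_G(u)`: vertices `x` of degree at least 3 that are adjacent to `u` or joined
to `u` through a `2`-vertex. -/
def Tset [Fintype V] (G : SimpleGraph V) [DecidableRel G.Adj] (u : V) : Set V :=
  {x | 3 ≤ G.degree x ∧ (G.Adj u x ∨ ∃ z : V, G.degree z = 2 ∧ G.Adj u z ∧ G.Adj z x)}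

/-- `t_G(u) = |T_G(u)|`. -/
noncomputable def tnum [Fintype V] (G : SimpleGraph V) [DecidableRel G.Adj] (u : V) : ℕ :=
  (Tset G u).ncard

/-- An injective coloring: vertices with a common neighbor get distinct colors. -/
def IsInjectiveColoring {α : Type*} (G : SimpleGraph V) (c : V → α) : Prop :=
  ∀ u v w : V, G.Adj u w → G.Adj v w → u ≠ v → c u ≠ c v

/-- The injective chromatic number. -/
noncomputable def injChromaticNumber (G : SimpleGraph V) : ℕ :=
  sInf {n | ∃ c : V → Fin n, IsInjectiveColoring G c}

/-- A graph has no cut vertex if deleting any vertex leaves a preconnected graph. -/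
def HasNoCutVertex {W : Type*} (H : SimpleGraph W) : Prop :=
  ∀ w : W, (H.induce ({w}ᶜ : Set W)).Preconnected

/-- A block of `G`: a maximal connected subgraph of `G` without a cut vertex. -/
def IsBlock (G : SimpleGraph V) (H : G.Subgraph) : Prop :=
  H.coe.Connected ∧ HasNoCutVertex H.coe ∧
    ∀ H' : G.Subgraph, H ≤ H' → H'.coe.Connected → HasNoCutVertex H'.coe → H' = H

/-- `c` is a `k`-fold coloring: each vertex receives `k` colors, adjacent vertices get
disjoint color sets. -/
def IsKFoldColoring {n : ℕ} (G : SimpleGraph V) (k : ℕ) (c : V → Finset (Fin n)) : Prop :=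
  (∀ v, (c v).card = k) ∧ ∀ u v, G.Adj u v → Disjoint (c u) (c v)

/-- The `k`-fold chromatic number `χ_k(G)`. -/
noncomputable def kfoldChromaticNumber (G : SimpleGraph V) (k : ℕ) : ℕ :=
  sInf {n | ∃ c : V → Finset (Fin n), IsKFoldColoring G k c}

/-- The fractional chromatic number `χ_f(G) = inf_k χ_k(G)/k`. -/
noncomputable def fracChromaticNumber (G : SimpleGraph V) : ℝ :=
  ⨅ k : {k : ℕ // 0 < k}, (kfoldChromaticNumber G k : ℝ) / (k : ℕ)

/-- The chromatic number as a natural number. -/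
noncomputable def natChromaticNumber (G : SimpleGraph V) : ℕ :=
  sInf {n | G.Colorable n}

/-- The independence number `α(G)`. -/
noncomputable def indepNumber (G : SimpleGraph V) : ℕ :=
  sSup {n | ∃ s : Set V, (∀ u ∈ s, ∀ v ∈ s, ¬ G.Adj u v) ∧ s.ncard = n}

/-- The bipartite graph `G̃` from the reduction: original vertices `V`, vertices
`s_{uv}, s'_{uv}` (type `↥G.edgeSet × Fin 2`, left summand) and `t_{uv}, t'_{uv}`
(right summand); each of `s_{uv}, s'_{uv}` is joined to `u` and `v`, and all
edges between `V_s` and `V_t` are present. -/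
def tildeBip (G : SimpleGraph V) :
    SimpleGraph (V ⊕ ((↥G.edgeSet × Fin 2) ⊕ (↥G.edgeSet × Fin 2))) :=
  SimpleGraph.fromRel fun x y =>
    (∃ (a : V) (e : ↥G.edgeSet) (i : Fin 2),
        x = Sum.inl a ∧ y = Sum.inr (Sum.inl (e, i)) ∧ a ∈ (e : Sym2 V)) ∨
    (∃ p q, x = Sum.inr (Sum.inl p) ∧ y = Sum.inr (Sum.inr q))

/-- The split graph `G̃` from the reduction: original vertices `V` and a clique on
`V_s = {s_{uv}, s'_{uv}, s''_{uv}}`, each of the three joined to `u` and `v`. -/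
def tildeSplit (G : SimpleGraph V) : SimpleGraph (V ⊕ (↥G.edgeSet × Fin 3)) :=
  SimpleGraph.fromRel fun x y =>
    (∃ (a : V) (e : ↥G.edgeSet) (i : Fin 3),
        x = Sum.inl a ∧ y = Sum.inr (e, i) ∧ a ∈ (e : Sym2 V)) ∨
    (∃ p q, x = Sum.inr p ∧ y = Sum.inr q)

/-- The graph `H`: `k` copies of `V` together with `V_s` and `V_t` as in `tildeBip`. -/
def HBip (G : SimpleGraph V) (k : ℕ) :
    SimpleGraph ((V × Fin k) ⊕ ((↥G.edgeSet × Fin 2) ⊕ (↥G.edgeSet × Fin 2))) :=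
  SimpleGraph.fromRel fun x y =>
    (∃ (a : V) (j : Fin k) (e : ↥G.edgeSet) (i : Fin 2),
        x = Sum.inl (a, j) ∧ y = Sum.inr (Sum.inl (e, i)) ∧ a ∈ (e : Sym2 V)) ∨
    (∃ p q, x = Sum.inr (Sum.inl p) ∧ y = Sum.inr (Sum.inr q))

/-- The graph `H`: `k` copies of `V` together with the clique `V_s` as in `tildeSplit`. -/
def HSplit (G : SimpleGraph V) (k : ℕ) :
    SimpleGraph ((V × Fin k) ⊕ (↥G.edgeSet × Fin 3)) :=
  SimpleGraph.fromRel fun x y =>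
    (∃ (a : V) (j : Fin k) (e : ↥G.edgeSet) (i : Fin 3),
        x = Sum.inl (a, j) ∧ y = Sum.inr (e, i) ∧ a ∈ (e : Sym2 V)) ∨
    (∃ p q, x = Sum.inr p ∧ y = Sum.inr q)




lemma HSplit_adj_ll (G : SimpleGraph V) (k : ℕ) (a b : V × Fin k) :
    ¬ (HSplit G k).Adj (Sum.inl a) (Sum.inl b) := by
  rw [HSplit, SimpleGraph.fromRel_adj]
  rintro ⟨-, (⟨a',j',e',i',h1,h2,h3⟩|⟨p',q',h1,h2⟩)|(⟨a',j',e',i',h1,h2,h3⟩|⟨p',q',h1,h2⟩)⟩ <;>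
    simp at h1 h2

lemma HSplit_adj_lr (G : SimpleGraph V) (k : ℕ) (a : V × Fin k) (p : ↥G.edgeSet × Fin 3) :
    (HSplit G k).Adj (Sum.inl a) (Sum.inr p) ↔ a.1 ∈ (p.1 : Sym2 V) := by
  rw [HSplit, SimpleGraph.fromRel_adj]
  constructor
  · rintro ⟨-, (⟨a',j',e',i',h1,h2,h3⟩|⟨p',q',h1,h2⟩)|(⟨a',j',e',i',h1,h2,h3⟩|⟨p',q',h1,h2⟩)⟩ <;>
      first
      | (injection h1 with h1; subst h1; injection h2 with h2; subst h2; exact h3)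
      | simp at h1 h2
  · intro h
    exact ⟨by simp, Or.inl (Or.inl ⟨a.1, a.2, p.1, p.2, rfl, rfl, h⟩)⟩

lemma HSplit_adj_rr (G : SimpleGraph V) (k : ℕ) (p q : ↥G.edgeSet × Fin 3) :
    (HSplit G k).Adj (Sum.inr p) (Sum.inr q) ↔ p ≠ q := by
  rw [HSplit, SimpleGraph.fromRel_adj]
  constructor
  · rintro ⟨h, -⟩ rfl; exact h rfl
  · intro h
    exact ⟨by simpa using h, Or.inl (Or.inr ⟨p, q, rfl, rfl⟩)⟩

lemma secondVertex {W : Type*} (H : SimpleGraph W) {x y : W} (hxy : x ≠ y)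
    (p : (H.deleteEdges {s(x, y)}).Walk x y) :
    ∃ w ∈ p.support, H.Adj x w ∧ w ≠ y := by
  cases p with
  | nil => exact absurd rfl hxy
  | cons h q =>
    rename_i w
    rw [SimpleGraph.deleteEdges_adj] at h
    refine ⟨w, ?_, h.1, ?_⟩
    · simp [SimpleGraph.Walk.support_cons]
    · rintro rfl
      exact h.2 (by simp)

lemma decode {χ c1 c2 j j' : ℕ} (h1 : c1 < χ) (h2 : c2 < χ)
    (h : j * χ + c1 = j' * χ + c2) : j = j' ∧ c1 = c2 := by
  have hχ : 0 < χ := Nat.pos_of_ne_zero (by omega)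
  have e1 : (χ * j + c1) / χ = j := by
    rw [Nat.mul_add_div hχ, Nat.div_eq_of_lt h1, add_zero]
  have e2 : (χ * j' + c2) / χ = j' := by
    rw [Nat.mul_add_div hχ, Nat.div_eq_of_lt h2, add_zero]
  have h' : χ * j + c1 = χ * j' + c2 := by rw [mul_comm χ j, mul_comm χ j']; exact h
  have hj : j = j' := by rw [← e1, h', e2]
  refine ⟨hj, ?_⟩
  subst hj
  omega

lemma upper_exists [Fintype V] [DecidableEq V] (G : SimpleGraph V) [DecidableRel G.Adj]
    (hV : Nonempty V) (k : ℕ) {χn : ℕ} (col : G.Coloring (Fin χn)) :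
    ∃ c : ((V × Fin k) ⊕ (↥G.edgeSet × Fin 3)) → Fin (k * χn + 3 * G.edgeFinset.card),
      IsRVDColoring (HSplit G k) c := by
  classical
  have hχ : 0 < χn := by
    rcases hV with ⟨v0⟩
    exact (col v0).pos
  have hcard : Fintype.card (↥G.edgeSet × Fin 3) = 3 * G.edgeFinset.card := by
    rw [Fintype.card_prod, Fintype.card_fin, SimpleGraph.edgeFinset_card]; ring
  let e2 : (↥G.edgeSet × Fin 3) ≃ Fin (3 * G.edgeFinset.card) := Fintype.equivFinOfCardEq hcard
  have hlt : ∀ a : V × Fin k, a.2.1 * χn + (col a.1).1 < k * χn := by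
    rintro ⟨u, j⟩
    calc j.1 * χn + (col u).1 < (j.1 + 1) * χn := by rw [add_one_mul]; omega
    _ ≤ k * χn := Nat.mul_le_mul_right _ j.2
  let c : ((V × Fin k) ⊕ (↥G.edgeSet × Fin 3)) → Fin (k * χn + 3 * G.edgeFinset.card) :=
    Sum.elim (fun a => Fin.castAdd _ ⟨a.2.1 * χn + (col a.1).1, hlt a⟩)
      (fun p => Fin.natAdd _ (e2 p))
  have hne : ∀ (a : V × Fin k) (p : ↥G.edgeSet × Fin 3), c (Sum.inl a) ≠ c (Sum.inr p) := by
    intro a p h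
    have := congrArg Fin.val h
    simp only [c, Sum.elim_inl, Sum.elim_inr, Fin.coe_castAdd, Fin.coe_natAdd] at this
    have := hlt a
    omega
  have hinr : ∀ p q : ↥G.edgeSet × Fin 3, c (Sum.inr p) = c (Sum.inr q) → p = q := by
    intro p q h
    have hv := congrArg Fin.val h
    simp only [c, Sum.elim_inr, Fin.coe_natAdd] at hv
    exact e2.injective (Fin.ext (by omega))
  have hinl : ∀ a b : V × Fin k, c (Sum.inl a) = c (Sum.inl b) →
      col a.1 = col b.1 ∧ a.2 = b.2 := by
    intro a b h
    have hv := congrArg Fin.val h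
    simp only [c, Sum.elim_inl, Fin.coe_castAdd] at hv
    obtain ⟨h1, h2⟩ := decode (col a.1).2 (col b.1).2 hv
    exact ⟨Fin.ext h2, Fin.ext h1⟩
  refine ⟨c, ?_⟩
  intro x y hxy
  have hins : Set.InjOn c (insert x {w | (HSplit G k).Adj x w ∧ w ≠ y}) := by
    intro a ha b hb hab
    have mem_char : ∀ z ∈ insert x {w | (HSplit G k).Adj x w ∧ w ≠ y},
        z = x ∨ (HSplit G k).Adj x z := by
      rintro z (rfl | ⟨hz, -⟩)
      · exact Or.inl rfl
      · exact Or.inr hz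
    rcases a with a' | p' <;> rcases b with b' | q'
    · rcases mem_char _ ha with h1 | h1 <;> rcases mem_char _ hb with h2 | h2
      · rw [h1, h2]
      · subst h1; exact absurd h2 (HSplit_adj_ll G k a' b')
      · subst h2; exact absurd h1 (HSplit_adj_ll G k b' a')
      · rcases x with x' | xp
        · exact absurd h1 (HSplit_adj_ll G k x' a')
        · have m1 : a'.1 ∈ (xp.1 : Sym2 V) := by
            have h1' := h1.symm
            rwa [HSplit_adj_lr] at h1'
          have m2 : b'.1 ∈ (xp.1 : Sym2 V) := by
            have h2' := h2.symm
            rwa [HSplit_adj_lr] at h2'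
          obtain ⟨hc1, hc2⟩ := hinl a' b' hab
          by_cases hw : a'.1 = b'.1
          · rw [Prod.ext hw hc2]
          · exfalso
            have hedge : (xp.1 : Sym2 V) = s(a'.1, b'.1) :=
              (Sym2.mem_and_mem_iff hw).1 ⟨m1, m2⟩
            have hadj : G.Adj a'.1 b'.1 := by
              have h3 : (xp.1 : Sym2 V) ∈ G.edgeSet := xp.1.2
              rw [hedge] at h3
              exact h3
            exact col.valid hadj hc1
    · exact absurd hab (hne a' q')
    · exact absurd hab.symm (hne b' p')
    · rw [hinr p' q' hab]
  refine ⟨{w | (HSplit G k).Adj x w ∧ w ≠ y}, by simp [(HSplit G k).irrefl], by simp, ?_,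
    fun _ => Or.inl hins, fun _ => hins.mono (Set.subset_insert _ _)⟩
  intro p
  obtain ⟨w, hw, h1, h2⟩ := secondVertex _ hxy p
  exact ⟨w, hw, h1, h2⟩

lemma mid_mem {W : Type*} (H : SimpleGraph W) {x y m : W} {S : Set W} (hxy : x ≠ y)
    (hcut : ∀ p : (H.deleteEdges {s(x, y)}).Walk x y, ∃ v ∈ p.support, v ∈ S)
    (hx : x ∉ S) (hy : y ∉ S) (hmx : m ≠ x) (hmy : m ≠ y)
    (h1 : H.Adj x m) (h2 : H.Adj m y) : m ∈ S := by
  have a1 : (H.deleteEdges {s(x, y)}).Adj x m := by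
    rw [SimpleGraph.deleteEdges_adj]
    refine ⟨h1, ?_⟩
    rw [Set.mem_singleton_iff, Sym2.eq_iff]
    rintro (⟨-, rfl⟩ | ⟨rfl, rfl⟩)
    · exact hmy rfl
    · exact hmx rfl
  have a2 : (H.deleteEdges {s(x, y)}).Adj m y := by
    rw [SimpleGraph.deleteEdges_adj]
    refine ⟨h2, ?_⟩
    rw [Set.mem_singleton_iff, Sym2.eq_iff]
    rintro (⟨rfl, -⟩ | ⟨rfl, rfl⟩)
    · exact hmx rfl
    · exact hmy rfl
  obtain ⟨v, hv, hvS⟩ := hcut (SimpleGraph.Walk.cons a1 (SimpleGraph.Walk.cons a2 SimpleGraph.Walk.nil))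
  simp [SimpleGraph.Walk.support_cons] at hv
  rcases hv with rfl | rfl | rfl
  · exact absurd hvS hx
  · exact hvS
  · exact absurd hvS hy

lemma rvd_nonempty {W : Type*} [Fintype W] (H : SimpleGraph W) :
    ∃ c : W → Fin (Fintype.card W), IsRVDColoring H c := by
  refine ⟨Fintype.equivFin W, ?_⟩
  intro x y hxy
  refine ⟨{w | H.Adj x w ∧ w ≠ y}, ?_, ?_, ?_, ?_, ?_⟩
  · simp [H.irrefl]
  · simp
  · intro p
    obtain ⟨w, hw, h1, h2⟩ := secondVertex H hxy p
    exact ⟨w, hw, h1, h2⟩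
  · intro _
    exact Or.inl (fun a _ b _ h => (Fintype.equivFin W).injective h)
  · intro _
    exact fun a _ b _ h => (Fintype.equivFin W).injective h

/-- The key set on which `c` must be injective. -/
def Aset (G : SimpleGraph V) (k : ℕ) (e : ↥G.edgeSet) :
    Set ((V × Fin k) ⊕ (↥G.edgeSet × Fin 3)) :=
  {w | (∃ p, w = Sum.inr p) ∨ ∃ a j, w = Sum.inl (a, j) ∧ a ∈ (e.1 : Sym2 V)}

lemma keyInj [Fintype V] (G : SimpleGraph V) [DecidableRel G.Adj] {k : ℕ} (hk : 0 < k)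
    {n : ℕ} {c : ((V × Fin k) ⊕ (↥G.edgeSet × Fin 3)) → Fin n}
    (hc : IsRVDColoring (HSplit G k) c) (e : ↥G.edgeSet) :
    Set.InjOn c (Aset G k e) := by
  classical
  obtain ⟨u, v, huv, hev⟩ : ∃ u v, G.Adj u v ∧ e.1 = s(u, v) := by
    obtain ⟨ed, hed⟩ := e
    induction ed using Sym2.ind with
    | _ u v => exact ⟨u, v, hed, rfl⟩
  -- three s-vertices of e get distinct colors
  have tri : ∀ i i' : Fin 3, i ≠ i' →
      c (Sum.inr (e, i)) ≠ c (Sum.inr (e, i')) := by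
    intro i i' hii
    set j0 : Fin k := ⟨0, hk⟩
    have hxy : (Sum.inl (u, j0) : (V × Fin k) ⊕ (↥G.edgeSet × Fin 3)) ≠ Sum.inl (v, j0) := by
      simp [huv.ne]
    obtain ⟨S, hx, hy, hcut, -, hnadj⟩ := hc _ _ hxy
    have hS : Set.InjOn c S := hnadj (HSplit_adj_ll G k _ _)
    have hmem : ∀ i'' : Fin 3, (Sum.inr (e, i'') : (V × Fin k) ⊕ (↥G.edgeSet × Fin 3)) ∈ S := by
      intro i''
      refine mid_mem _ hxy hcut hx hy (by simp) (by simp) ?_ ?_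
      · rw [HSplit_adj_lr]; rw [hev]; exact Sym2.mem_mk_left u v
      · rw [← SimpleGraph.adj_comm, HSplit_adj_lr]; rw [hev]; exact Sym2.mem_mk_right u v
    intro h
    have := hS (hmem i) (hmem i') h
    simp only [Sum.inr.injEq, Prod.mk.injEq] at this
    exact hii this.2
  -- step: cuts for adjacent s-vertex pairs
  have step : ∀ i1 i2 : Fin 3, i1 ≠ i2 →
      Set.InjOn c (Aset G k e \ {Sum.inr (e, i1)}) ∨
      Set.InjOn c (Aset G k e \ {Sum.inr (e, i2)}) := by
    intro i1 i2 h12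
    set x : (V × Fin k) ⊕ (↥G.edgeSet × Fin 3) := Sum.inr (e, i1) with hxdef
    set y : (V × Fin k) ⊕ (↥G.edgeSet × Fin 3) := Sum.inr (e, i2) with hydef
    have hxy : x ≠ y := by simp [hxdef, hydef, h12]
    obtain ⟨S, hx, hy, hcut, hadjc, -⟩ := hc _ _ hxy
    have hAdj : (HSplit G k).Adj x y := (HSplit_adj_rr G k _ _).2 (by simp [h12])
    have hM : Aset G k e \ {x, y} ⊆ S := by
      rintro m ⟨hmA, hm⟩
      simp only [Set.mem_insert_iff, Set.mem_singleton_iff, not_or] at hm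
      have adj1 : (HSplit G k).Adj x m := by
        rcases hmA with ⟨p, rfl⟩ | ⟨a, j, rfl, hae⟩
        · rw [SimpleGraph.adj_comm, HSplit_adj_rr]
          rintro rfl; exact hm.1 rfl
        · rw [SimpleGraph.adj_comm, HSplit_adj_lr]; exact hae
      have adj2 : (HSplit G k).Adj m y := by
        rcases hmA with ⟨p, rfl⟩ | ⟨a, j, rfl, hae⟩
        · rw [HSplit_adj_rr]
          rintro rfl; exact hm.2 rfl
        · rw [HSplit_adj_lr]; exact hae
      exact mid_mem _ hxy hcut hx hy hm.1 hm.2 adj1 adj2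
    rcases hadjc hAdj with h | h
    · right
      refine h.mono ?_
      rintro m ⟨hmA, hmy⟩
      rcases eq_or_ne m x with rfl | hmx
      · exact Set.mem_insert _ _
      · refine Set.mem_insert_iff.2 (Or.inr (hM ⟨hmA, ?_⟩))
        rintro (rfl | rfl)
        · exact hmx rfl
        · exact hmy rfl
    · left
      refine h.mono ?_
      rintro m ⟨hmA, hmx⟩
      rcases eq_or_ne m y with rfl | hmy
      · exact Set.mem_insert _ _
      · refine Set.mem_insert_iff.2 (Or.inr (hM ⟨hmA, ?_⟩))
        rintro (rfl | rfl)
        · exact hmx rfl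
        · exact hmy rfl
  -- finish: injectivity on all of A
  intro a ha b hb hab
  by_contra hne
  have hmemA : ∀ i : Fin 3, (Sum.inr (e, i) : (V × Fin k) ⊕ (↥G.edgeSet × Fin 3)) ∈ Aset G k e :=
    fun i => Or.inl ⟨(e, i), rfl⟩
  have main : ∀ i1 i2 : Fin 3, i1 ≠ i2 → a ≠ Sum.inr (e, i1) → a ≠ Sum.inr (e, i2) →
      b ≠ Sum.inr (e, i1) → b ≠ Sum.inr (e, i2) → False := by
    intro i1 i2 h12 ha1 ha2 hb1 hb2
    rcases step i1 i2 h12 with h | h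
    · exact hne (h ⟨ha, ha1⟩ ⟨hb, hb1⟩ hab)
    · exact hne (h ⟨ha, ha2⟩ ⟨hb, hb2⟩ hab)
  by_cases hA : ∃ i, a = Sum.inr (e, i) <;> by_cases hB : ∃ i, b = Sum.inr (e, i)
  · obtain ⟨i, rfl⟩ := hA
    obtain ⟨i', rfl⟩ := hB
    have hii : i ≠ i' := by
      rintro rfl; exact hne rfl
    exact tri i i' hii hab
  · obtain ⟨i, rfl⟩ := hA
    push_neg at hB
    obtain ⟨i1, i2, h12, hi1, hi2⟩ : ∃ i1 i2 : Fin 3, i1 ≠ i2 ∧ i1 ≠ i ∧ i2 ≠ i := by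
      fin_cases i <;> decide
    exact main i1 i2 h12 (by simp [hi1.symm]) (by simp [hi2.symm]) (hB i1) (hB i2)
  · obtain ⟨i, rfl⟩ := hB
    push_neg at hA
    obtain ⟨i1, i2, h12, hi1, hi2⟩ : ∃ i1 i2 : Fin 3, i1 ≠ i2 ∧ i1 ≠ i ∧ i2 ≠ i := by
      fin_cases i <;> decide
    exact main i1 i2 h12 (hA i1) (hA i2) (by simp [hi1.symm]) (by simp [hi2.symm])
  · push_neg at hA hB
    exact main 0 1 (by decide) (hA 0) (hA 1) (hB 0) (hB 1)


lemma lower [Fintype V] [DecidableEq V] (G : SimpleGraph V) [DecidableRel G.Adj]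
    (hiso : ∀ v : V, ∃ u : V, G.Adj v u) (hE : G.edgeSet.Nonempty)
    {k : ℕ} (hk : 0 < k) {n : ℕ} {c : ((V × Fin k) ⊕ (↥G.edgeSet × Fin 3)) → Fin n}
    (hc : IsRVDColoring (HSplit G k) c) :
    kfoldChromaticNumber G k + 3 * G.edgeFinset.card ≤ n := by
  classical
  have hcard3 : Fintype.card (↥G.edgeSet × Fin 3) = 3 * G.edgeFinset.card := by
    rw [Fintype.card_prod, Fintype.card_fin, SimpleGraph.edgeFinset_card]; ring
  obtain ⟨e0v, he0⟩ := hE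
  set e0 : ↥G.edgeSet := ⟨e0v, he0⟩ with he0d
  -- a vertex of V
  obtain ⟨u0, v0, hu0v0, hev0⟩ : ∃ u v, G.Adj u v ∧ e0.1 = s(u, v) := by
    obtain ⟨ed, hed⟩ := e0
    induction ed using Sym2.ind with
    | _ u v => exact ⟨u, v, hed, rfl⟩
  have eOf : ∀ u : V, ∃ e : ↥G.edgeSet, u ∈ (e.1 : Sym2 V) := by
    intro u
    obtain ⟨u', hu'⟩ := hiso u
    exact ⟨⟨s(u, u'), G.mem_edgeSet.2 hu'⟩, Sym2.mem_mk_left u u'⟩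
  have memA : ∀ (e : ↥G.edgeSet) (u : V) (j : Fin k), u ∈ (e.1 : Sym2 V) →
      (Sum.inl (u, j) : (V × Fin k) ⊕ (↥G.edgeSet × Fin 3)) ∈ Aset G k e :=
    fun e u j h => Or.inr ⟨u, j, rfl, h⟩
  have memAr : ∀ (e : ↥G.edgeSet) (p : ↥G.edgeSet × Fin 3),
      (Sum.inr p : (V × Fin k) ⊕ (↥G.edgeSet × Fin 3)) ∈ Aset G k e :=
    fun e p => Or.inl ⟨p, rfl⟩
  -- colour facts
  have F2' : ∀ (u : V) (j : Fin k) (p : ↥G.edgeSet × Fin 3),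
      c (Sum.inl (u, j)) ≠ c (Sum.inr p) := by
    intro u j p h
    obtain ⟨e, he⟩ := eOf u
    have := keyInj G hk hc e (memA e u j he) (memAr e p) h
    simp at this
  have F4 : ∀ (u : V) (j j' : Fin k), c (Sum.inl (u, j)) = c (Sum.inl (u, j')) → j = j' := by
    intro u j j' h
    obtain ⟨e, he⟩ := eOf u
    have := keyInj G hk hc e (memA e u j he) (memA e u j' he) h
    simpa using this
  have F3 : ∀ (u v : V), G.Adj u v → ∀ (j j' : Fin k),
      c (Sum.inl (u, j)) ≠ c (Sum.inl (v, j')) := by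
    intro u v huv j j' h
    set e : ↥G.edgeSet := ⟨s(u, v), G.mem_edgeSet.2 huv⟩ with hed
    have := keyInj G hk hc e (memA e u j (Sym2.mem_mk_left u v))
      (memA e v j' (Sym2.mem_mk_right u v)) h
    simp only [Sum.inl.injEq, Prod.mk.injEq] at this
    exact huv.ne this.1
  -- the finset of colours on V_s
  set s : Finset (Fin n) := Finset.image (fun p : ↥G.edgeSet × Fin 3 => c (Sum.inr p))
    Finset.univ with hsdef
  have hinjr : Function.Injective fun p : ↥G.edgeSet × Fin 3 => c (Sum.inr p) := by
    intro p q h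
    have := keyInj G hk hc e0 (memAr e0 p) (memAr e0 q) h
    simpa using this
  have hscard : s.card = 3 * G.edgeFinset.card := by
    rw [hsdef, Finset.card_image_of_injective _ hinjr, Finset.card_univ, hcard3]
  have hnotin : ∀ (u : V) (j : Fin k), c (Sum.inl (u, j)) ∉ s := by
    intro u j h
    rw [hsdef, Finset.mem_image] at h
    obtain ⟨p, -, hp⟩ := h
    exact F2' u j p hp.symm
  set t : Finset (Fin n) := Finset.univ \ s with htdef
  have ht : t.card = n - 3 * G.edgeFinset.card := by
    rw [htdef, Finset.card_sdiff_of_subset (Finset.subset_univ _), Finset.card_univ, Fintype.card_fin,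
      hscard]
  have hmemt : ∀ (u : V) (j : Fin k), c (Sum.inl (u, j)) ∈ t := by
    intro u j
    rw [htdef, Finset.mem_sdiff]
    exact ⟨Finset.mem_univ _, hnotin u j⟩
  have hsub : 3 * G.edgeFinset.card ≤ n := by
    have := Finset.card_le_univ s
    rwa [hscard, Fintype.card_fin] at this
  have hpos : 0 < n - 3 * G.edgeFinset.card := by
    rw [← ht]
    exact Finset.card_pos.2 ⟨_, hmemt u0 ⟨0, hk⟩⟩
  set ψ : Fin n → Fin (n - 3 * G.edgeFinset.card) := fun a =>
    if h : a ∈ t then Fin.cast ht (t.equivFin ⟨a, h⟩) else ⟨0, hpos⟩ with hψdef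
  have ψinj : ∀ a ∈ t, ∀ b ∈ t, ψ a = ψ b → a = b := by
    intro a ha b hb h
    rw [hψdef] at h
    simp only [dif_pos ha, dif_pos hb] at h
    have := t.equivFin.injective (Fin.ext (by simpa using congrArg Fin.val h))
    exact Subtype.ext_iff.1 this
  set c'' : V → Finset (Fin (n - 3 * G.edgeFinset.card)) := fun u =>
    Finset.image (fun j : Fin k => ψ (c (Sum.inl (u, j)))) Finset.univ with hc''def
  have hkfold : IsKFoldColoring G k c'' := by
    constructor
    · intro u
      rw [hc''def]
      rw [Finset.card_image_of_injOn, Finset.card_univ, Fintype.card_fin]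
      intro j _ j' _ h
      exact F4 u j j' (ψinj _ (hmemt u j) _ (hmemt u j') h)
    · intro u v huv
      rw [Finset.disjoint_left]
      intro a hau hav
      rw [hc''def, Finset.mem_image] at hau hav
      obtain ⟨j, -, hj⟩ := hau
      obtain ⟨j', -, hj'⟩ := hav
      exact F3 u v huv j j' (ψinj _ (hmemt u j) _ (hmemt v j') (hj.trans hj'.symm))
  have hle : kfoldChromaticNumber G k ≤ n - 3 * G.edgeFinset.card :=
    Nat.sInf_le ⟨c'', hkfold⟩
  omega

lemma decode' {χ c1 c2 j j' : ℕ} (h1 : c1 < χ) (h2 : c2 < χ)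
    (h : j * χ + c1 = j' * χ + c2) : j = j' ∧ c1 = c2 := by
  have hχ : 0 < χ := Nat.pos_of_ne_zero (by omega)
  have e1 : (χ * j + c1) / χ = j := by
    rw [Nat.mul_add_div hχ, Nat.div_eq_of_lt h1, add_zero]
  have e2 : (χ * j' + c2) / χ = j' := by
    rw [Nat.mul_add_div hχ, Nat.div_eq_of_lt h2, add_zero]
  have h' : χ * j + c1 = χ * j' + c2 := by rw [mul_comm χ j, mul_comm χ j']; exact h
  have hj : j = j' := by rw [← e1, h', e2]
  exact ⟨hj, by subst hj; omega⟩

lemma kfold_exists [Fintype V] [DecidableEq V] (G : SimpleGraph V) (m : ℕ) (hm : 0 < m) :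
    ∃ c : V → Finset (Fin (m * Fintype.card V)), IsKFoldColoring G m c := by
  classical
  set eqv := Fintype.equivFin V with heqv
  have hlt : ∀ (v : V) (t : Fin m), (eqv v).1 * m + t.1 < m * Fintype.card V := by
    intro v t
    calc (eqv v).1 * m + t.1 < ((eqv v).1 + 1) * m := by rw [add_one_mul]; omega
    _ ≤ Fintype.card V * m := Nat.mul_le_mul_right _ (eqv v).2
    _ = m * Fintype.card V := mul_comm _ _
  refine ⟨fun v => Finset.image (fun t : Fin m => ⟨(eqv v).1 * m + t.1, hlt v t⟩)
    Finset.univ, ?_, ?_⟩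
  · intro v
    rw [Finset.card_image_of_injOn, Finset.card_univ, Fintype.card_fin]
    intro t _ t' _ h
    have := congrArg Fin.val h
    simp only at this
    exact Fin.ext (by omega)
  · intro u v huv
    rw [Finset.disjoint_left]
    intro a hau hav
    rw [Finset.mem_image] at hau hav
    obtain ⟨t, -, ht⟩ := hau
    obtain ⟨t', -, ht'⟩ := hav
    have hv := congrArg Fin.val (ht.trans ht'.symm)
    simp only at hv
    obtain ⟨h1, -⟩ := decode' t.2 t'.2 hv
    exact huv.ne (eqv.injective (Fin.ext h1))

lemma indep_bddAbove [Fintype V] (G : SimpleGraph V) :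
    BddAbove {n | ∃ s : Set V, (∀ u ∈ s, ∀ v ∈ s, ¬ G.Adj u v) ∧ s.ncard = n} := by
  refine ⟨Fintype.card V, ?_⟩
  rintro n ⟨s, -, rfl⟩
  calc s.ncard ≤ (Set.univ : Set V).ncard :=
    Set.ncard_le_ncard (Set.subset_univ s) Set.finite_univ
  _ = Fintype.card V := by rw [Set.ncard_univ, Nat.card_eq_fintype_card]

lemma indep_pos [Fintype V] (G : SimpleGraph V) (hV : Nonempty V) : 0 < indepNumber G := by
  obtain ⟨v⟩ := hV
  have : 1 ∈ {n | ∃ s : Set V, (∀ u ∈ s, ∀ v ∈ s, ¬ G.Adj u v) ∧ s.ncard = n} := by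
    refine ⟨{v}, ?_, Set.ncard_singleton v⟩
    rintro u rfl w rfl
    exact G.irrefl
  exact lt_of_lt_of_le one_pos (le_csSup (indep_bddAbove G) this)

lemma count_bound [Fintype V] [DecidableEq V] (G : SimpleGraph V) {m N : ℕ}
    {c : V → Finset (Fin N)} (hc : IsKFoldColoring G m c) :
    m * Fintype.card V ≤ N * indepNumber G := by
  classical
  have hclass : ∀ a : Fin N,
      (Finset.univ.filter (fun v => a ∈ c v)).card ≤ indepNumber G := by
    intro a
    apply le_csSup (indep_bddAbove G)
    refine ⟨(Finset.univ.filter (fun v => a ∈ c v) : Finset V), ?_, Set.ncard_coe_finset _⟩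
    intro u hu v hv hadj
    simp only [Finset.coe_filter, Set.mem_setOf_eq] at hu hv
    exact Finset.disjoint_left.1 (hc.2 u v hadj) hu.2 hv.2
  have hsum : ∑ v : V, (c v).card = ∑ a : Fin N,
      (Finset.univ.filter (fun v => a ∈ c v)).card := by
    have h1 : ∀ v : V, (c v).card = ∑ a : Fin N, if a ∈ c v then 1 else 0 := by
      intro v
      rw [← Finset.filter_univ_mem (c v), Finset.card_filter]
      simp
    simp_rw [h1, Finset.card_filter]
    exact Finset.sum_comm
  calc m * Fintype.card V = ∑ v : V, (c v).card := by
        simp [hc.1, Finset.sum_const, Finset.card_univ, mul_comm]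
  _ = _ := hsum
  _ ≤ ∑ _a : Fin N, indepNumber G := Finset.sum_le_sum fun a _ => hclass a
  _ = N * indepNumber G := by simp [Finset.sum_const, mul_comm]

lemma frac_lower [Fintype V] [DecidableEq V] (G : SimpleGraph V) (hV : Nonempty V) :
    (Fintype.card V : ℝ) / (indepNumber G : ℝ) ≤ fracChromaticNumber G := by
  classical
  have : Nonempty {k : ℕ // 0 < k} := ⟨⟨1, one_pos⟩⟩
  refine le_ciInf ?_
  rintro ⟨m, hm⟩
  have hα := indep_pos G hV
  obtain ⟨c, hc⟩ := Nat.sInf_mem (⟨m * Fintype.card V, kfold_exists G m hm⟩ :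
    {n | ∃ c : V → Finset (Fin n), IsKFoldColoring G m c}.Nonempty)
  have hnat : m * Fintype.card V ≤ kfoldChromaticNumber G m * indepNumber G :=
    count_bound G hc
  rw [div_le_div_iff₀ (by exact_mod_cast hα) (by exact_mod_cast hm)]
  calc (Fintype.card V : ℝ) * m = (m * Fintype.card V : ℕ) := by push_cast; ring
  _ ≤ ((kfoldChromaticNumber G m * indepNumber G : ℕ) : ℝ) := by exact_mod_cast hnat
  _ = (kfoldChromaticNumber G m : ℝ) * indepNumber G := by push_cast; ring

lemma frac_upper [Fintype V] (G : SimpleGraph V) {k : ℕ} (hk : 0 < k) :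
    (k : ℝ) * fracChromaticNumber G ≤ (kfoldChromaticNumber G k : ℝ) := by
  have hbdd : BddBelow (Set.range fun m : {k : ℕ // 0 < k} =>
      (kfoldChromaticNumber G m : ℝ) / (m : ℕ)) := by
    refine ⟨0, ?_⟩
    rintro x ⟨i, rfl⟩
    positivity
  have h1 : fracChromaticNumber G ≤ (kfoldChromaticNumber G k : ℝ) / k :=
    ciInf_le hbdd ⟨k, hk⟩
  have hk' : (0:ℝ) < k := by exact_mod_cast hk
  calc (k : ℝ) * fracChromaticNumber G ≤ (k : ℝ) * ((kfoldChromaticNumber G k : ℝ) / k) :=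
    mul_le_mul_of_nonneg_left h1 (le_of_lt hk')
  _ = (kfoldChromaticNumber G k : ℝ) := by field_simp


/-- For the graph `H` built from `k` copies of `V` together with the clique
`V_s`, we have `kn/α(G) + 3|E| ≤ k·χ_f(G) + 3|E| ≤ χ_k(G) + 3|E| ≤ rvd(H) ≤
k·χ(G) + 3|E|`. -/
theorem rvd_HSplit_bounds [Fintype V] [DecidableEq V] (G : SimpleGraph V)
    [DecidableRel G.Adj]
    (hiso : ∀ v : V, ∃ u : V, G.Adj v u) (hE : G.edgeSet.Nonempty)
    (k : ℕ) (hk : 0 < k) :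
    ((k : ℝ) * (Fintype.card V : ℝ) / (indepNumber G : ℝ) + 3 * (G.edgeFinset.card : ℝ)
        ≤ (k : ℝ) * fracChromaticNumber G + 3 * (G.edgeFinset.card : ℝ)) ∧
    ((k : ℝ) * fracChromaticNumber G + 3 * (G.edgeFinset.card : ℝ)
        ≤ (kfoldChromaticNumber G k : ℝ) + 3 * (G.edgeFinset.card : ℝ)) ∧
    (kfoldChromaticNumber G k + 3 * G.edgeFinset.card ≤ rvd (HSplit G k)) ∧
    (rvd (HSplit G k) ≤ k * natChromaticNumber G + 3 * G.edgeFinset.card) := by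
  
  classical
  have hV : Nonempty V := by
    obtain ⟨ed, hed⟩ := hE
    induction ed using Sym2.ind with
    | _ u v => exact ⟨u⟩
  refine ⟨add_le_add_left ?_ _, add_le_add_left (frac_upper G hk) _, ?_, ?_⟩
  · rw [mul_div_assoc]
    exact mul_le_mul_of_nonneg_left (frac_lower G hV) (by positivity)
  · have hne : {n | ∃ c : ((V × Fin k) ⊕ (↥G.edgeSet × Fin 3)) → Fin n,
        IsRVDColoring (HSplit G k) c}.Nonempty := ⟨_, rvd_nonempty (HSplit G k)⟩
    have hmem := Nat.sInf_mem hne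
    obtain ⟨c, hc⟩ := hmem
    unfold rvd
    exact lower G hiso hE hk hc
  · have hcol : G.Colorable (natChromaticNumber G) :=
      Nat.sInf_mem (⟨Fintype.card V, G.colorable_of_fintype⟩ : {n | G.Colorable n}.Nonempty)
    unfold rvd
    exact Nat.sInf_le (upper_exists G hV k hcol.some)
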